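/- Fix N ≥ 2, d ≥ 1, and ε ≥ 0. On the canonical space (ℝ^d)^N with coordinate process S_1,…,S_N and natural filtration, let M_ε(𝛍) denote the set of probability measures P with marginals P ∘ S_k^{-1} = μ_k for k = 1,…,N and satisfying E_P[|E_P[S_{k+1} | F_k] − S_k|] ≤ ε for k = 1,…,N−1, where 𝛍 = (μ_1,…,μ_N) is a vector of probability measures on ℝ^d with finite first moments. Then M_ε(𝛍) is convex, and it is compact with respect to the topology of weak convergence. -/

import Mathlib

open MeasureTheory Filter
open scoped ENNReal

noncomputable section

abbrev Vec (d : ℕ) := Fin d → ℝ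
abbrev Traj (N d : ℕ) := Fin N → Vec d

def l1 {d : ℕ} (x : Vec d) : ℝ := ∑ i, |x i|

def trajDist {N d : ℕ} (ω ω' : Traj N d) : ℝ := ∑ k, l1 (ω k - ω' k)

def Coupling {E : Type*} [MeasurableSpace E] (μ ν : Measure E) : Set (Measure (E × E)) :=
  {P | P.map Prod.fst = μ ∧ P.map Prod.snd = ν}

def W1 {d : ℕ} (μ ν : Measure (Vec d)) : ℝ≥0∞ :=
  ⨅ P ∈ Coupling μ ν, ∫⁻ p, ENNReal.ofReal (l1 (p.1 - p.2)) ∂P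

def WSum {N d : ℕ} (μs νs : Fin N → Measure (Vec d)) : ℝ≥0∞ :=
  ∑ k, W1 (μs k) (νs k)

def WTraj {N d : ℕ} (P Q : Measure (Traj N d)) : ℝ≥0∞ :=
  ⨅ R ∈ Coupling P Q, ∫⁻ p, ENNReal.ofReal (trajDist p.1 p.2) ∂ R

def IsApproxMart {N d : ℕ} (ε : ℝ) (μs : Fin N → Measure (Vec d))
    (P : Measure (Traj N d)) : Prop :=
  IsProbabilityMeasure P ∧
  (∀ k : Fin N, P.map (fun ω => ω k) = μs k) ∧
  ∀ (k : ℕ) (hk : k + 1 < N),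
    ∀ h : BoundedContinuousFunction (Fin (k+1) → Vec d) (Vec d),
      ∫ ω, ∑ i, h (fun j => ω ⟨j.1, Nat.lt_trans j.2 hk⟩) i *
        (ω ⟨k+1, hk⟩ i - ω ⟨k, Nat.lt_of_succ_lt hk⟩ i) ∂P ≤ ε * ‖h‖

def Pval {N d : ℕ} (ε : ℝ) (μs : Fin N → Measure (Vec d))
    (c : Traj N d → ℝ) : ℝ :=
  sSup {x | ∃ P, IsApproxMart ε μs P ∧ x = ∫ ω, c ω ∂P}

/-! ### Auxiliary development -/

open Topology BoundedContinuousFunction Metric TopologicalSpace Set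
open scoped NNReal

section Prokhorov

variable {X : Type*} [MetricSpace X] [SecondCountableTopology X]
  [MeasurableSpace X] [BorelSpace X]

/-- Urysohn-type pair of nonnegative bounded continuous functions adapted to a compact set
inside an open set. -/
lemma exists_urysohn_pair {K U : Set X} (hK : IsCompact K) (hU : IsOpen U) (hKU : K ⊆ U) :
    ∃ f g : X →ᵇ ℝ≥0, (∀ x, f x + g x = 1) ∧ (∀ x ∈ K, f x = 1) ∧ (∀ x, f x ≤ 1) ∧
      (∀ x, f x ≠ 0 → x ∈ U) := by
  rcases K.eq_empty_or_nonempty with rfl | hne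
  · refine ⟨0, 1, fun x => ?_, fun x hx => absurd hx (Set.notMem_empty x), fun x => ?_,
      fun x hx => absurd rfl hx⟩
    · simp
    · simp
  · obtain ⟨δ, δpos, hδ⟩ := hK.exists_thickening_subset_open hU hKU
    set r : X → ℝ := fun x => max 0 (1 - infDist x K / δ) with hr
    set r' : X → ℝ := fun x => min 1 (infDist x K / δ) with hr'
    have hrc : Continuous r := continuous_const.max
      (continuous_const.sub ((continuous_infDist_pt K).div_const δ))
    have hrc' : Continuous r' := continuous_const.min
      ((continuous_infDist_pt K).div_const δ)
    have hrb : ∀ x, ‖r x‖ ≤ 1 := by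
      intro x
      rw [Real.norm_eq_abs, abs_of_nonneg (le_max_left _ _)]
      refine max_le zero_le_one ?_
      have : 0 ≤ infDist x K / δ := div_nonneg (infDist_nonneg) δpos.le
      linarith
    have hrb' : ∀ x, ‖r' x‖ ≤ 1 := by
      intro x
      rw [Real.norm_eq_abs]
      have h0 : 0 ≤ infDist x K / δ := div_nonneg (infDist_nonneg) δpos.le
      rw [abs_of_nonneg (le_min zero_le_one h0)]
      exact min_le_left _ _
    set F : X →ᵇ ℝ := BoundedContinuousFunction.ofNormedAddCommGroup r hrc 1 hrb
    set G : X →ᵇ ℝ := BoundedContinuousFunction.ofNormedAddCommGroup r' hrc' 1 hrb'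
    refine ⟨F.nnrealPart, G.nnrealPart, ?_, ?_, ?_, ?_⟩
    · intro x
      have hsum : r x + r' x = 1 := by
        have h0 : 0 ≤ infDist x K / δ := div_nonneg (infDist_nonneg) δpos.le
        rcases le_total (infDist x K / δ) 1 with h1 | h1
        · rw [hr, hr']
          simp only
          rw [max_eq_right (by linarith), min_eq_right h1]
          ring
        · rw [hr, hr']
          simp only
          rw [max_eq_left (by linarith), min_eq_left h1]
          ring
      have : (r x).toNNReal + (r' x).toNNReal = ((r x) + (r' x)).toNNReal := by
        rw [Real.toNNReal_add (le_max_left _ _) (le_min zero_le_one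
          (div_nonneg (infDist_nonneg) δpos.le))]
      calc F.nnrealPart x + G.nnrealPart x = (r x).toNNReal + (r' x).toNNReal := rfl
        _ = ((r x) + (r' x)).toNNReal := this
        _ = 1 := by rw [hsum]; simp
    · intro x hx
      have : r x = 1 := by
        rw [hr]; simp only
        rw [infDist_zero_of_mem hx]
        norm_num
      show (r x).toNNReal = 1
      rw [this]; simp
    · intro x
      show (r x).toNNReal ≤ 1
      rw [← Real.toNNReal_one]
      refine Real.toNNReal_mono ?_
      have h0 : 0 ≤ infDist x K / δ := div_nonneg (infDist_nonneg) δpos.le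
      rw [hr]
      exact max_le zero_le_one (by linarith)
    · intro x hx
      have hpos : 0 < r x := by
        by_contra hle
        push_neg at hle
        refine hx ?_
        show (r x).toNNReal = 0
        exact Real.toNNReal_of_nonpos hle
      have : infDist x K / δ < 1 := by
        by_contra hge
        push_neg at hge
        have : r x = 0 := by rw [hr]; simp only; rw [max_eq_left (by linarith)]
        rw [this] at hpos; exact lt_irrefl _ hpos
      have : infDist x K < δ := by
        rwa [div_lt_one δpos] at this
      exact hδ ((mem_thickening_iff_infDist_lt hne).mpr this)

/-- Local copy of the Riesz content for bounded continuous test functions. -/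
def rieszContentAuxB {Y : Type*} [TopologicalSpace Y] (Λ : (Y →ᵇ ℝ≥0) →ₗ[ℝ≥0] ℝ≥0) :
    Compacts Y → ℝ≥0 := fun K =>
  sInf (Λ '' { f : Y →ᵇ ℝ≥0 | ∀ x ∈ K, (1 : ℝ≥0) ≤ f x })

theorem rieszContentAuxB_image_nonempty {Y : Type*} [TopologicalSpace Y]
    (Λ : (Y →ᵇ ℝ≥0) →ₗ[ℝ≥0] ℝ≥0) (K : Compacts Y) :
    (Λ '' { f : Y →ᵇ ℝ≥0 | ∀ x ∈ K, (1 : ℝ≥0) ≤ f x }).Nonempty := by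
  rw [Set.image_nonempty]
  use (1 : Y →ᵇ ℝ≥0)
  intro x _
  simp only [BoundedContinuousFunction.coe_one, Pi.one_apply]; rfl

theorem rieszContentAuxB_mono {Y : Type*} [TopologicalSpace Y]
    (Λ : (Y →ᵇ ℝ≥0) →ₗ[ℝ≥0] ℝ≥0) {K₁ K₂ : Compacts Y} (h : K₁ ≤ K₂) :
    rieszContentAuxB Λ K₁ ≤ rieszContentAuxB Λ K₂ :=
  csInf_le_csInf (OrderBot.bddBelow _) (rieszContentAuxB_image_nonempty Λ K₂)
    (Set.image_mono (Set.setOf_subset_setOf.mpr fun _ f_hyp x x_in_K₁ => f_hyp x (h x_in_K₁)))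

theorem rieszContentAuxB_le {Y : Type*} [TopologicalSpace Y]
    (Λ : (Y →ᵇ ℝ≥0) →ₗ[ℝ≥0] ℝ≥0) {K : Compacts Y} {f : Y →ᵇ ℝ≥0}
    (h : ∀ x ∈ K, (1 : ℝ≥0) ≤ f x) :
    rieszContentAuxB Λ K ≤ Λ f :=
  csInf_le (OrderBot.bddBelow _) ⟨f, ⟨h, rfl⟩⟩

theorem exists_lt_rieszContentAuxB_add_pos {Y : Type*} [TopologicalSpace Y]
    (Λ : (Y →ᵇ ℝ≥0) →ₗ[ℝ≥0] ℝ≥0) (K : Compacts Y) {ε : ℝ≥0} (εpos : 0 < ε) :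
    ∃ f : Y →ᵇ ℝ≥0, (∀ x ∈ K, (1 : ℝ≥0) ≤ f x) ∧ Λ f < rieszContentAuxB Λ K + ε := by
  obtain ⟨α, ⟨⟨f, f_hyp⟩, α_hyp⟩⟩ :=
    exists_lt_of_csInf_lt (rieszContentAuxB_image_nonempty Λ K)
      (lt_add_of_pos_right (rieszContentAuxB Λ K) εpos)
  refine ⟨f, f_hyp.left, ?_⟩
  rw [f_hyp.right]
  exact α_hyp

theorem rieszContentAuxB_sup_le {Y : Type*} [TopologicalSpace Y]
    (Λ : (Y →ᵇ ℝ≥0) →ₗ[ℝ≥0] ℝ≥0) (K1 K2 : Compacts Y) :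
    rieszContentAuxB Λ (K1 ⊔ K2) ≤ rieszContentAuxB Λ K1 + rieszContentAuxB Λ K2 := by
  apply _root_.le_of_forall_pos_le_add
  intro ε εpos
  obtain ⟨f1, hf1⟩ := exists_lt_rieszContentAuxB_add_pos Λ K1 (half_pos εpos)
  obtain ⟨f2, hf2⟩ := exists_lt_rieszContentAuxB_add_pos Λ K2 (half_pos εpos)
  have hu : ∀ x ∈ K1 ⊔ K2, (1 : ℝ≥0) ≤ (f1 + f2) x := by
    rintro x (x_in_K1 | x_in_K2)
    · exact le_add_right (hf1.left x x_in_K1)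
    · exact le_add_left (hf2.left x x_in_K2)
  refine (rieszContentAuxB_le Λ hu).trans (le_of_lt ?_)
  rw [map_add]
  refine lt_of_lt_of_le (_root_.add_lt_add hf1.right hf2.right) (le_of_eq ?_)
  rw [add_assoc, add_comm (ε / 2), add_assoc, add_halves ε, add_assoc]

/-- The Riesz content associated to a positive linear functional on nonnegative bounded
continuous functions. -/
def rieszCont (Λ : (X →ᵇ ℝ≥0) →ₗ[ℝ≥0] ℝ≥0) : Content X where
  toFun := rieszContentAuxB Λ
  mono' _ _ h := rieszContentAuxB_mono Λ h
  sup_le' := rieszContentAuxB_sup_le Λ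
  sup_disjoint' K₁ K₂ hdis _h₁ h₂ := by
    refine le_antisymm (rieszContentAuxB_sup_le Λ K₁ K₂) ?_
    refine le_csInf (rieszContentAuxB_image_nonempty Λ (K₁ ⊔ K₂)) ?_
    rintro y ⟨h, hh, rfl⟩
    obtain ⟨f, g, hfg, hf1, _hfle, hfU⟩ := exists_urysohn_pair K₁.isCompact
      h₂.isOpen_compl (hdis.subset_compl_right)
    have hhK : ∀ x, x ∈ (K₁ : Set X) ∪ (K₂ : Set X) → 1 ≤ h x := by
      intro x hx
      exact hh x (by rw [← SetLike.mem_coe, Compacts.coe_sup]; exact hx)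
    have e1 : rieszContentAuxB Λ K₁ ≤ Λ (h * f) := by
      refine rieszContentAuxB_le Λ ?_
      intro x hx
      have h1 : f x = 1 := hf1 x hx
      have h2 : 1 ≤ h x := hhK x (Set.mem_union_left _ hx)
      show (1:ℝ≥0) ≤ h x * f x
      rw [h1, mul_one]
      exact h2
    have e2 : rieszContentAuxB Λ K₂ ≤ Λ (h * g) := by
      refine rieszContentAuxB_le Λ ?_
      intro x hx
      have h0 : f x = 0 := by
        by_contra hne
        exact (hfU x hne) hx
      have h1 : g x = 1 := by
        have := hfg x
        rw [h0, zero_add] at this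
        exact this
      have h2 : 1 ≤ h x := hhK x (Set.mem_union_right _ hx)
      show (1:ℝ≥0) ≤ h x * g x
      rw [h1, mul_one]
      exact h2
    have e3 : Λ (h * f) + Λ (h * g) = Λ h := by
      rw [← map_add]
      congr 1
      ext x
      simp only [BoundedContinuousFunction.coe_add, BoundedContinuousFunction.coe_mul,
        Pi.add_apply, Pi.mul_apply, NNReal.coe_add, NNReal.coe_mul]
      rw [← mul_add, ← NNReal.coe_add, hfg x, NNReal.coe_one, mul_one]
    calc rieszContentAuxB Λ K₁ + rieszContentAuxB Λ K₂ ≤ Λ (h * f) + Λ (h * g) :=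
          add_le_add e1 e2
      _ = Λ h := e3

variable (P : ℕ → ProbabilityMeasure X)

/-- Test a sequence of probability measures against a nonnegative bounded continuous function. -/
def Tfun (f : X →ᵇ ℝ≥0) (n : ℕ) : ℝ≥0 :=
  (P n).toFiniteMeasure.testAgainstNN f

lemma exists_limit_functional (𝒰 : Ultrafilter ℕ) :
    ∃ L : (X →ᵇ ℝ≥0) → ℝ≥0, ∀ f, Tendsto (Tfun P f) 𝒰 (𝓝 (L f)) := by
  have key : ∀ f : X →ᵇ ℝ≥0, ∃ a : ℝ≥0, Tendsto (Tfun P f) 𝒰 (𝓝 a) := by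
    intro f
    set b : ℝ≥0 := nndist f 0
    have hb : ∀ n, Tfun P f n ∈ Set.Icc (0 : ℝ≥0) b := by
      intro n
      refine ⟨zero_le, ?_⟩
      have h1 : (⇑f : X → ℝ≥0) ≤ fun _ => b := by
        intro x
        have hd := BoundedContinuousFunction.dist_coe_le_dist (f := f) (g := 0) x
        simp only [BoundedContinuousFunction.coe_zero, Pi.zero_apply] at hd
        have hx : dist (f x) (0 : ℝ≥0) = ((f x : ℝ≥0) : ℝ) := by
          rw [NNReal.dist_eq]; simp
        have hb' : dist f (0 : X →ᵇ ℝ≥0) = ((b : ℝ≥0) : ℝ) := rfl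
        rw [hx, hb'] at hd
        exact_mod_cast hd
      have h2 := (P n).toFiniteMeasure.testAgainstNN_mono
        (g := BoundedContinuousFunction.const X b) (by exact h1)
      rw [FiniteMeasure.testAgainstNN_const] at h2
      simpa [Tfun] using h2
    obtain ⟨a, -, ha⟩ := (isCompact_Icc (a := (0:ℝ≥0)) (b := b)).ultrafilter_le_nhds
      (𝒰.map (Tfun P f)) (by
        rw [Ultrafilter.coe_map]
        exact le_principal_iff.mpr (Filter.mem_map.mpr (Filter.univ_mem' hb)))
    exact ⟨a, ha⟩
  choose L hL using key
  exact ⟨L, hL⟩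

/-- A set of probability measures on a second-countable metric space which is sequentially closed
and uniformly tight is compact. -/
theorem isCompact_of_isSeqClosed_of_tight {S : Set (ProbabilityMeasure X)}
    (hcl : IsSeqClosed S)
    (ht : ∀ δ : ℝ≥0, 0 < δ → ∃ K : Set X, IsCompact K ∧ ∀ P ∈ S, P.toMeasure Kᶜ ≤ (δ : ℝ≥0∞)) :
    IsCompact S := by
  classical
  letI : MetricSpace (ProbabilityMeasure X) := TopologicalSpace.metrizableSpaceMetric _
  apply IsSeqCompact.isCompact
  intro Ps hPs
  -- countable family of open sets: finite unions from a countable basis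
  obtain ⟨b, hbrange⟩ : ∃ b : ℕ → Set X, insert ∅ (countableBasis X) = Set.range b :=
    ((countable_countableBasis X).insert ∅).exists_eq_range (Set.insert_nonempty _ _)
  have hbopen : ∀ i, IsOpen (b i) := by
    intro i
    have hmem : b i ∈ insert ∅ (countableBasis X) := hbrange ▸ Set.mem_range_self i
    rcases Set.mem_insert_iff.mp hmem with h | h
    · rw [h]; exact isOpen_empty
    · exact (isBasis_countableBasis X).isOpen h
  letI : Denumerable (Finset ℕ) := Denumerable.ofEncodableOfInfinite _
  set eqv : Finset ℕ ≃ ℕ := Denumerable.eqv (Finset ℕ) with heqv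
  set E : ℕ → Set X := fun m => ⋃ i ∈ (eqv.symm m), b i with hE
  have hEopen : ∀ m, IsOpen (E m) := fun m => isOpen_biUnion fun i _ => hbopen i
  -- subsequence along which the measures of all the `E m` converge
  have hmemIcc : ∀ n, (fun m => Ps n (E m)) ∈ Set.univ.pi (fun _ : ℕ => Set.Icc (0:ℝ≥0) 1) := by
    intro n m _
    exact ⟨zero_le, (Ps n).apply_le_one (E m)⟩
  obtain ⟨q, _hqmem, φ, hφ, hφtend⟩ :=
    ((isCompact_univ_pi (fun _ : ℕ => isCompact_Icc)).isSeqCompact hmemIcc)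
  have hqm : ∀ m, Tendsto (fun j => Ps (φ j) (E m)) atTop (𝓝 (q m)) := fun m =>
    (tendsto_pi_nhds.mp hφtend) m
  haveI hmapne : (atTop.map φ).NeBot := map_neBot
  set 𝒰 : Ultrafilter ℕ := Ultrafilter.of (atTop.map φ) with h𝒰
  have h𝒰le : (𝒰 : Filter ℕ) ≤ atTop.map φ := Ultrafilter.of_le _
  obtain ⟨L, hL⟩ := exists_limit_functional Ps 𝒰
  -- The limit functional is linear
  have hLadd : ∀ f g, L (f + g) = L f + L g := by
    intro f g
    refine tendsto_nhds_unique (hL (f + g)) ?_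
    refine Tendsto.congr (fun n => ?_) ((hL f).add (hL g))
    exact (FiniteMeasure.testAgainstNN_add _ f g).symm
  have hLsmul : ∀ (c : ℝ≥0) (f : X →ᵇ ℝ≥0), L (c • f) = c • L f := by
    intro c f
    refine tendsto_nhds_unique (hL (c • f)) ?_
    have h2 : ∀ n, Tfun Ps (c • f) n = c * Tfun Ps f n := by
      intro n
      rw [Tfun, Tfun, FiniteMeasure.testAgainstNN_smul, smul_eq_mul]
    have h3 : Tendsto (fun n => c * Tfun Ps f n) 𝒰 (𝓝 (c * L f)) := (hL f).const_mul c
    rw [smul_eq_mul]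
    exact Tendsto.congr (fun n => (h2 n).symm) h3
  set Λ : (X →ᵇ ℝ≥0) →ₗ[ℝ≥0] ℝ≥0 :=
    { toFun := L, map_add' := hLadd, map_smul' := hLsmul } with hΛ
  -- comparisons between test integrals and measures of sets
  have hT_le_meas : ∀ (f : X →ᵇ ℝ≥0) (U : Set X), MeasurableSet U → (∀ x, f x ≤ 1) →
      (∀ x, f x ≠ 0 → x ∈ U) → ∀ n, Tfun Ps f n ≤ Ps n U := by
    intro f U hUm hf1 hfU n
    have key : ((Tfun Ps f n : ℝ≥0) : ℝ≥0∞) ≤ (Ps n).toMeasure U := by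
      rw [Tfun, FiniteMeasure.testAgainstNN_coe_eq]
      calc ∫⁻ x, (f x : ℝ≥0∞) ∂((Ps n).toFiniteMeasure : Measure X)
          ≤ ∫⁻ x, U.indicator (1 : X → ℝ≥0∞) x ∂((Ps n).toFiniteMeasure : Measure X) := by
            apply lintegral_mono
            intro x
            by_cases hx : f x = 0
            · simp [hx]
            · rw [Set.indicator_of_mem (hfU x hx), Pi.one_apply]
              exact ENNReal.coe_le_one_iff.mpr (hf1 x)
        _ = (Ps n).toMeasure U := by
            rw [lintegral_indicator_one hUm]
            rfl
    rw [← ProbabilityMeasure.ennreal_coeFn_eq_coeFn_toMeasure] at key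
    exact_mod_cast key
  have hmeas_le_T : ∀ (f : X →ᵇ ℝ≥0) (K : Set X), MeasurableSet K → (∀ x ∈ K, 1 ≤ f x) →
      ∀ n, (Ps n).toMeasure K ≤ ((Tfun Ps f n : ℝ≥0) : ℝ≥0∞) := by
    intro f K hKm hf1 n
    rw [Tfun, FiniteMeasure.testAgainstNN_coe_eq]
    calc (Ps n).toMeasure K
        = ∫⁻ x, K.indicator (1 : X → ℝ≥0∞) x ∂((Ps n).toFiniteMeasure : Measure X) := by
          rw [lintegral_indicator_one hKm]; rfl
      _ ≤ ∫⁻ x, (f x : ℝ≥0∞) ∂((Ps n).toFiniteMeasure : Measure X) := by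
          apply lintegral_mono
          intro x
          by_cases hx : x ∈ K
          · rw [Set.indicator_of_mem hx, Pi.one_apply]
            exact ENNReal.one_le_coe_iff.mpr (hf1 x hx)
          · simp [hx]
  -- the limit measure, via the Riesz content
  set μ₀ : Measure X := (rieszCont Λ).measure with hμ₀
  have hopen_eq : ∀ (U : Set X) (hU : IsOpen U),
      μ₀ U = (rieszCont Λ).innerContent ⟨U, hU⟩ := by
    intro U hU
    rw [hμ₀, Content.measure_apply _ hU.measurableSet]
    exact (rieszCont Λ).outerMeasure_opens ⟨U, hU⟩
  -- λ(K) is dominated by limits of measures of open supersets from the family E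
  have hK_le : ∀ (K : Compacts X) (m : ℕ), (K : Set X) ⊆ E m → rieszContentAuxB Λ K ≤ q m := by
    intro K m hKE
    obtain ⟨f, g, hfg, hf1, hfle, hfU⟩ := exists_urysohn_pair K.isCompact (hEopen m) hKE
    have h1 : rieszContentAuxB Λ K ≤ L f :=
      rieszContentAuxB_le Λ (fun x hx => (hf1 x hx).ge)
    have h2 : ∀ n, Tfun Ps f n ≤ Ps n (E m) :=
      hT_le_meas f (E m) (hEopen m).measurableSet hfle hfU
    have h3 : Tendsto (fun n => Ps n (E m)) 𝒰 (𝓝 (q m)) :=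
      (tendsto_map'_iff.mpr (hqm m)).mono_left h𝒰le
    exact h1.trans (le_of_tendsto_of_tendsto' (hL f) h3 h2)
  -- the limit measure is a probability measure
  have hle1 : μ₀ Set.univ ≤ 1 := by
    have hL1 : L 1 = 1 := by
      have hT1 : Tfun Ps (1 : X →ᵇ ℝ≥0) = fun _ => (1:ℝ≥0) := by
        funext n
        rw [Tfun, FiniteMeasure.testAgainstNN_one, ProbabilityMeasure.mass_toFiniteMeasure]
      have : Tendsto (Tfun Ps (1 : X →ᵇ ℝ≥0)) 𝒰 (𝓝 1) := by
        rw [hT1]; exact tendsto_const_nhds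
      exact tendsto_nhds_unique (hL 1) this
    rw [hopen_eq Set.univ isOpen_univ, Content.innerContent]
    refine iSup₂_le fun K _hK => ?_
    have h1 : rieszContentAuxB Λ K ≤ L 1 :=
      rieszContentAuxB_le Λ (fun x _ => le_refl 1)
    rw [hL1] at h1
    show ((rieszContentAuxB Λ K : ℝ≥0) : ℝ≥0∞) ≤ 1
    exact ENNReal.coe_le_one_iff.mpr h1
  have hge1 : (1 : ℝ≥0∞) ≤ μ₀ Set.univ := by
    refine ENNReal.le_of_forall_pos_le_add fun δ hδ _ => ?_
    have hδ2 : (0:ℝ≥0) < δ/2 := by positivity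
    obtain ⟨K, hKc, hKt⟩ := ht (δ/2) hδ2
    set K' : Compacts X := ⟨K, hKc⟩ with hK'
    -- 1 - δ/2 ≤ measures of K along the sequence
    have hPK : ∀ n, (1 : ℝ≥0∞) ≤ (Ps n).toMeasure K + (δ/2 : ℝ≥0) := by
      intro n
      have h1 : (Ps n).toMeasure K + (Ps n).toMeasure Kᶜ = 1 := by
        rw [measure_add_measure_compl hKc.isClosed.measurableSet]
        exact measure_univ
      calc (1:ℝ≥0∞) = (Ps n).toMeasure K + (Ps n).toMeasure Kᶜ := h1.symm
        _ ≤ (Ps n).toMeasure K + (δ/2 : ℝ≥0) :=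
            add_le_add_right (hKt (Ps n) (hPs n)) _
    -- approximate the content from above by a test function
    obtain ⟨f, hf1, hfΛ⟩ := exists_lt_rieszContentAuxB_add_pos Λ K' hδ2
    have hone : (1 : ℝ≥0∞) ≤ (L f : ℝ≥0∞) + (δ/2 : ℝ≥0) := by
      refine le_of_tendsto_of_tendsto' (tendsto_const_nhds)
        (((ENNReal.tendsto_coe.mpr (hL f)).add tendsto_const_nhds)) (fun n => ?_)
      exact (hPK n).trans (add_le_add_left (hmeas_le_T f K hKc.isClosed.measurableSet hf1 n) _)
    have hcontent : ((rieszContentAuxB Λ K' : ℝ≥0)  : ℝ≥0∞) ≤ μ₀ Set.univ := by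
      rw [hopen_eq Set.univ isOpen_univ]
      exact (rieszCont Λ).le_innerContent K' ⟨Set.univ, isOpen_univ⟩ (Set.subset_univ _)
    calc (1:ℝ≥0∞) ≤ (L f : ℝ≥0∞) + (δ/2 : ℝ≥0) := hone
      _ ≤ ((rieszContentAuxB Λ K' + δ/2 : ℝ≥0) : ℝ≥0∞) + (δ/2 : ℝ≥0) := by
          gcongr
          exact_mod_cast ENNReal.coe_le_coe.mpr hfΛ.le
      _ = ((rieszContentAuxB Λ K' : ℝ≥0) : ℝ≥0∞) + ((δ/2 : ℝ≥0) : ℝ≥0∞) + ((δ/2:ℝ≥0) : ℝ≥0∞) := by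
          rw [ENNReal.coe_add]
      _ ≤ μ₀ Set.univ + ((δ/2 : ℝ≥0) : ℝ≥0∞) + ((δ/2:ℝ≥0) : ℝ≥0∞) := by gcongr
      _ = μ₀ Set.univ + (((δ/2 + δ/2) : ℝ≥0) : ℝ≥0∞) := by
          rw [ENNReal.coe_add, add_assoc]
      _ = μ₀ Set.univ + (δ : ℝ≥0) := by rw [add_halves]
  haveI hμ₀prob : IsProbabilityMeasure μ₀ := ⟨le_antisymm hle1 hge1⟩
  set μ' : ProbabilityMeasure X := ⟨μ₀, hμ₀prob⟩ with hμ'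
  -- the portmanteau condition along the subsequence
  have hliminf : ∀ G, IsOpen G → μ' G ≤ atTop.liminf (fun j => Ps (φ j) G) := by
    intro G hG
    have hEG : μ₀ G ≤ ((atTop.liminf (fun j => Ps (φ j) G) : ℝ≥0) : ℝ≥0∞) := by
      rw [hopen_eq G hG, Content.innerContent]
      refine iSup₂_le fun K hKG => ?_
      obtain ⟨m, hKm, hmG⟩ : ∃ m, (K : Set X) ⊆ E m ∧ E m ⊆ G := by
        have hcover : ∀ x ∈ (K : Set X), ∃ i : ℕ, x ∈ b i ∧ b i ⊆ G := by
          intro x hx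
          obtain ⟨v, hvB, hxv, hvG⟩ :=
            (isBasis_countableBasis X).exists_subset_of_mem_open (hKG hx) hG
          have : v ∈ Set.range b := hbrange ▸ Set.mem_insert_of_mem _ hvB
          obtain ⟨i, rfl⟩ := this
          exact ⟨i, hxv, hvG⟩
        set c : ℕ → Set X := fun i => if b i ⊆ G then b i else ∅ with hc
        have hcopen : ∀ i, IsOpen (c i) := by
          intro i
          by_cases hi : b i ⊆ G
          · simpa [hc, hi] using hbopen i
          · simp [hc, hi]
        have hccover : (K : Set X) ⊆ ⋃ i, c i := by
          intro x hx
          obtain ⟨i, hxi, hiG⟩ := hcover x hx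
          exact Set.mem_iUnion.mpr ⟨i, by rw [hc]; simp only [if_pos hiG]; exact hxi⟩
        obtain ⟨t, htc⟩ := K.isCompact.elim_finite_subcover c hcopen hccover
        set t' : Finset ℕ := t.filter (fun i => b i ⊆ G) with ht'
        have hEt' : E (eqv t') = ⋃ i ∈ t', b i := by
          rw [hE]
          simp only [Equiv.symm_apply_apply]
        refine ⟨eqv t', ?_, ?_⟩
        · rw [hEt']
          intro x hx
          obtain ⟨i, hit, hxi⟩ := Set.mem_iUnion₂.mp (htc hx)
          have hne : (c i).Nonempty := ⟨x, hxi⟩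
          have hiG : b i ⊆ G := by
            by_contra hcon
            rw [hc] at hne
            simp only [if_neg hcon] at hne
            exact Set.not_nonempty_empty hne
          refine Set.mem_biUnion (Finset.mem_filter.mpr ⟨hit, hiG⟩) ?_
          rw [hc] at hxi
          simpa only [if_pos hiG] using hxi
        · rw [hEt']
          refine Set.iUnion₂_subset fun i hi => ?_
          exact (Finset.mem_filter.mp hi).2
      have h1 : rieszContentAuxB Λ K ≤ q m := hK_le K m hKm
      have h2 : q m ≤ atTop.liminf (fun j => Ps (φ j) G) := by
        have hlim : atTop.liminf (fun j => Ps (φ j) (E m)) = q m := (hqm m).liminf_eq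
        rw [← hlim]
        refine liminf_le_liminf (Eventually.of_forall fun j => (Ps (φ j)).apply_mono hmG)
          ?_ ?_
        · exact isBoundedUnder_of ⟨0, fun j => zero_le⟩
        · exact (isBoundedUnder_of ⟨1, fun j => (Ps (φ j)).apply_le_one _⟩).isCoboundedUnder_ge
      show ((rieszContentAuxB Λ K : ℝ≥0) : ℝ≥0∞) ≤ _
      exact ENNReal.coe_le_coe.mpr (h1.trans h2)
    have hrw : μ' G = (μ₀ G).toNNReal := rfl
    rw [hrw]
    have := ENNReal.toNNReal_mono (ENNReal.coe_ne_top) hEG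
    rwa [ENNReal.toNNReal_coe] at this
  have htendsto : Tendsto (fun j => Ps (φ j)) atTop (𝓝 μ') :=
    MeasureTheory.tendsto_of_forall_isOpen_le_liminf hliminf
  exact ⟨μ', hcl (fun n => hPs (φ n)) htendsto, φ, hφ, htendsto⟩

end Prokhorov

section Approx

variable {N d : ℕ}

/-- The integrand appearing in the approximate-martingale condition. -/
def Gfun (k : ℕ) (hk : k + 1 < N) (h : BoundedContinuousFunction (Fin (k+1) → Vec d) (Vec d)) :
    Traj N d → ℝ :=
  fun ω => ∑ i, h (fun j => ω ⟨j.1, Nat.lt_trans j.2 hk⟩) i *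
    (ω ⟨k+1, hk⟩ i - ω ⟨k, Nat.lt_of_succ_lt hk⟩ i)

/-- Truncated version of the integrand. -/
def GfunR (k : ℕ) (hk : k + 1 < N) (h : BoundedContinuousFunction (Fin (k+1) → Vec d) (Vec d))
    (R : ℝ) : Traj N d → ℝ :=
  fun ω => ∑ i, h (fun j => ω ⟨j.1, Nat.lt_trans j.2 hk⟩) i *
    (max (-R) (min R (ω ⟨k+1, hk⟩ i - ω ⟨k, Nat.lt_of_succ_lt hk⟩ i)))

lemma l1_nonneg {x : Vec d} : 0 ≤ l1 x :=
  Finset.sum_nonneg fun _ _ => abs_nonneg _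

lemma continuous_l1 : Continuous (l1 (d := d)) := by
  apply continuous_finset_sum
  exact fun i _ => (continuous_apply i).abs

lemma abs_le_l1 (x : Vec d) (i : Fin d) : |x i| ≤ l1 x :=
  Finset.single_le_sum (f := fun j => |x j|) (fun j _ => abs_nonneg _) (Finset.mem_univ i)

lemma continuous_restrict {k : ℕ} (hk : k + 1 < N) :
    Continuous (fun (ω : Traj N d) (j : Fin (k+1)) => ω ⟨j.1, Nat.lt_trans j.2 hk⟩) :=
  continuous_pi fun j => continuous_apply _

lemma continuous_Gfun {k : ℕ} {hk : k + 1 < N}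
    {h : BoundedContinuousFunction (Fin (k+1) → Vec d) (Vec d)} :
    Continuous (Gfun k hk h) := by
  apply continuous_finset_sum
  intro i _
  exact ((continuous_apply i).comp (h.continuous.comp (continuous_restrict hk))).mul
    ((continuous_apply_apply _ i).sub
      (continuous_apply_apply _ i))

lemma continuous_GfunR {k : ℕ} {hk : k + 1 < N}
    {h : BoundedContinuousFunction (Fin (k+1) → Vec d) (Vec d)} {R : ℝ} :
    Continuous (GfunR k hk h R) := by
  apply continuous_finset_sum
  intro i _
  exact ((continuous_apply i).comp (h.continuous.comp (continuous_restrict hk))).mul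
    (continuous_const.max (continuous_const.min
      ((continuous_apply_apply _ i).sub
        (continuous_apply_apply _ i))))

lemma abs_Gfun_le {k : ℕ} {hk : k + 1 < N}
    {h : BoundedContinuousFunction (Fin (k+1) → Vec d) (Vec d)} (ω : Traj N d) :
    |Gfun k hk h ω| ≤ ‖h‖ * (l1 (ω ⟨k+1, hk⟩) + l1 (ω ⟨k, Nat.lt_of_succ_lt hk⟩)) := by
  have habs : ∀ (x : Fin (k+1) → Vec d) (i : Fin d), |h x i| ≤ ‖h‖ := fun x i =>
    (norm_le_pi_norm (h x) i).trans (h.norm_coe_le_norm x)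
  calc |Gfun k hk h ω| ≤ ∑ i, |h (fun j => ω ⟨j.1, Nat.lt_trans j.2 hk⟩) i *
        (ω ⟨k+1, hk⟩ i - ω ⟨k, Nat.lt_of_succ_lt hk⟩ i)| := Finset.abs_sum_le_sum_abs _ _
    _ ≤ ∑ i, ‖h‖ * (|ω ⟨k+1, hk⟩ i| + |ω ⟨k, Nat.lt_of_succ_lt hk⟩ i|) := by
        apply Finset.sum_le_sum
        intro i _
        rw [abs_mul]
        exact mul_le_mul (habs _ i) ((abs_sub _ _).trans_eq rfl) (abs_nonneg _)
          (norm_nonneg h)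
    _ = ‖h‖ * (l1 (ω ⟨k+1, hk⟩) + l1 (ω ⟨k, Nat.lt_of_succ_lt hk⟩)) := by
        rw [← Finset.mul_sum, Finset.sum_add_distrib]; rfl

lemma abs_GfunR_le {k : ℕ} {hk : k + 1 < N}
    {h : BoundedContinuousFunction (Fin (k+1) → Vec d) (Vec d)} {R : ℝ} (hR : 0 ≤ R)
    (ω : Traj N d) :
    |GfunR k hk h R ω| ≤ ‖h‖ * (d * R) := by
  have habs : ∀ (x : Fin (k+1) → Vec d) (i : Fin d), |h x i| ≤ ‖h‖ := fun x i =>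
    (norm_le_pi_norm (h x) i).trans (h.norm_coe_le_norm x)
  have htr : ∀ t : ℝ, |max (-R) (min R t)| ≤ R := by
    intro t
    rw [abs_le]
    exact ⟨le_max_left _ _ |>.trans_eq' (by ring), max_le (by linarith) (min_le_left _ _)⟩
  calc |GfunR k hk h R ω| ≤ ∑ i, |h (fun j => ω ⟨j.1, Nat.lt_trans j.2 hk⟩) i *
        (max (-R) (min R (ω ⟨k+1, hk⟩ i - ω ⟨k, Nat.lt_of_succ_lt hk⟩ i)))| :=
      Finset.abs_sum_le_sum_abs _ _
    _ ≤ ∑ _i : Fin d, ‖h‖ * R := by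
      apply Finset.sum_le_sum
      intro i _
      rw [abs_mul]
      exact mul_le_mul (habs _ i) (htr _) (abs_nonneg _) (norm_nonneg h)
    _ = ‖h‖ * (d * R) := by
      rw [Finset.sum_const, Finset.card_univ, Fintype.card_fin, nsmul_eq_mul]; ring

lemma abs_Gfun_sub_GfunR_le {k : ℕ} {hk : k + 1 < N}
    {h : BoundedContinuousFunction (Fin (k+1) → Vec d) (Vec d)} {R : ℝ} (hR : 0 ≤ R)
    (ω : Traj N d) :
    |Gfun k hk h ω - GfunR k hk h R ω| ≤
      ‖h‖ * ∑ i, (max 0 (|ω ⟨k+1, hk⟩ i| - R/2) + max 0 (|ω ⟨k, Nat.lt_of_succ_lt hk⟩ i| - R/2)) := by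
  have habs : ∀ (x : Fin (k+1) → Vec d) (i : Fin d), |h x i| ≤ ‖h‖ := fun x i =>
    (norm_le_pi_norm (h x) i).trans (h.norm_coe_le_norm x)
  have htr : ∀ t : ℝ, |t - max (-R) (min R t)| ≤ max 0 (|t| - R) := by
    intro t
    rcases le_total t R with h1 | h1
    · rcases le_total (-R) t with h2 | h2
      · rw [min_eq_right h1, max_eq_right h2, sub_self, abs_zero]
        exact le_max_left _ _
      · rw [abs_le]
        constructor
        · have : max (-R) (min R t) = -R := by
            rw [min_eq_right h1, max_eq_left h2]
          rw [this]
          have : |t| = -t := abs_of_nonpos (by linarith)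
          rw [this] at *
          have := le_max_right (0:ℝ) (-t - R)
          linarith
        · have : max (-R) (min R t) = -R := by
            rw [min_eq_right h1, max_eq_left h2]
          rw [this]
          have h0 := le_max_left (0:ℝ) (|t| - R)
          linarith
    · have hmm : max (-R) (min R t) = R := by
        rw [min_eq_left h1, max_eq_right (by linarith)]
      rw [hmm]
      have : |t| = t := abs_of_nonneg (by linarith)
      rw [abs_le]
      constructor
      · have h0 := le_max_left (0:ℝ) (|t| - R); linarith
      · have h0 := le_max_right (0:ℝ) (|t| - R); nlinarith [this]
  have hsplit : ∀ u v : ℝ, max 0 (|u - v| - R) ≤ max 0 (|u| - R/2) + max 0 (|v| - R/2) := by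
    intro u v
    apply max_le
    · have := le_max_left (0:ℝ) (|u| - R/2)
      have := le_max_left (0:ℝ) (|v| - R/2)
      linarith
    · have h1 := abs_sub (u) (v)
      have h2 := le_max_right (0:ℝ) (|u| - R/2)
      have h3 := le_max_right (0:ℝ) (|v| - R/2)
      linarith
  calc |Gfun k hk h ω - GfunR k hk h R ω|
      = |∑ i, h (fun j => ω ⟨j.1, Nat.lt_trans j.2 hk⟩) i *
          ((ω ⟨k+1, hk⟩ i - ω ⟨k, Nat.lt_of_succ_lt hk⟩ i) -
            max (-R) (min R (ω ⟨k+1, hk⟩ i - ω ⟨k, Nat.lt_of_succ_lt hk⟩ i)))| := by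
        rw [Gfun, GfunR, ← Finset.sum_sub_distrib]
        congr 1
        apply Finset.sum_congr rfl
        intro i _
        ring
    _ ≤ ∑ i, ‖h‖ * (max 0 (|ω ⟨k+1, hk⟩ i| - R/2) +
          max 0 (|ω ⟨k, Nat.lt_of_succ_lt hk⟩ i| - R/2)) := by
        refine (Finset.abs_sum_le_sum_abs _ _).trans (Finset.sum_le_sum fun i _ => ?_)
        rw [abs_mul]
        refine mul_le_mul (habs _ i) ((htr _).trans (hsplit _ _)) (abs_nonneg _) (norm_nonneg h)
    _ = ‖h‖ * ∑ i, (max 0 (|ω ⟨k+1, hk⟩ i| - R/2) +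
          max 0 (|ω ⟨k, Nat.lt_of_succ_lt hk⟩ i| - R/2)) := by
        rw [Finset.mul_sum]

variable {μs : Fin N → Measure (Vec d)}

lemma integrable_l1_eval {P : Measure (Traj N d)} (k : Fin N)
    (hm : P.map (fun ω => ω k) = μs k) (hmom : Integrable (fun x : Vec d => l1 x) (μs k)) :
    Integrable (fun ω : Traj N d => l1 (ω k)) P := by
  have hmeas : AEMeasurable (fun ω : Traj N d => ω k) P := (measurable_pi_apply k).aemeasurable
  have : Integrable (fun x : Vec d => l1 x) (P.map (fun ω => ω k)) := by rw [hm]; exact hmom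
  exact (integrable_map_measure (continuous_l1.aestronglyMeasurable) hmeas).mp this

lemma integrable_Gfun {P : Measure (Traj N d)} {k : ℕ} (hk : k + 1 < N)
    (h : BoundedContinuousFunction (Fin (k+1) → Vec d) (Vec d))
    (hm : ∀ k : Fin N, P.map (fun ω => ω k) = μs k)
    (hmom : ∀ k, Integrable (fun x : Vec d => l1 x) (μs k)) :
    Integrable (Gfun k hk h) P := by
  have hint : Integrable (fun ω : Traj N d =>
      ‖h‖ * (l1 (ω ⟨k+1, hk⟩) + l1 (ω ⟨k, Nat.lt_of_succ_lt hk⟩))) P :=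
    (((integrable_l1_eval _ (hm _) (hmom _)).add (integrable_l1_eval _ (hm _) (hmom _)))).const_mul _
  refine hint.mono' continuous_Gfun.aestronglyMeasurable ?_
  filter_upwards with ω
  rw [Real.norm_eq_abs]
  exact abs_Gfun_le ω

/-- The truncation error, expressed purely in terms of the marginals. -/
def errT (μs : Fin N → Measure (Vec d)) (k : ℕ) (hk : k + 1 < N)
    (h : BoundedContinuousFunction (Fin (k+1) → Vec d) (Vec d)) (R : ℝ) : ℝ :=
  ‖h‖ * ∑ i : Fin d, ((∫ x, max 0 (|x i| - R/2) ∂(μs ⟨k+1, hk⟩)) +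
    (∫ x, max 0 (|x i| - R/2) ∂(μs ⟨k, Nat.lt_of_succ_lt hk⟩)))

lemma integrable_tail {k : Fin N} (hmom : Integrable (fun x : Vec d => l1 x) (μs k))
    (i : Fin d) (c : ℝ) (hc : 0 ≤ c) :
    Integrable (fun x : Vec d => max 0 (|x i| - c)) (μs k) := by
  refine hmom.mono' ?_ ?_
  · exact (continuous_const.max (((continuous_apply i).abs).sub continuous_const)).aestronglyMeasurable
  · filter_upwards with x
    rw [Real.norm_eq_abs, abs_of_nonneg (le_max_left _ _)]
    exact max_le l1_nonneg (by linarith [abs_le_l1 x i])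

lemma abs_integral_Gfun_sub_le {P : Measure (Traj N d)} [IsProbabilityMeasure P] {k : ℕ}
    (hk : k + 1 < N) (h : BoundedContinuousFunction (Fin (k+1) → Vec d) (Vec d))
    (hm : ∀ k : Fin N, P.map (fun ω => ω k) = μs k)
    (hmom : ∀ k, Integrable (fun x : Vec d => l1 x) (μs k)) {R : ℝ} (hR : 0 ≤ R) :
    |∫ ω, Gfun k hk h ω ∂P - ∫ ω, GfunR k hk h R ω ∂P| ≤ errT μs k hk h R := by
  set a : Fin N := ⟨k+1, hk⟩
  set b : Fin N := ⟨k, Nat.lt_of_succ_lt hk⟩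
  have hG : Integrable (Gfun k hk h) P := integrable_Gfun hk h hm hmom
  have hGR : Integrable (GfunR k hk h R) P := by
    refine (integrable_const (‖h‖ * (d * R))).mono'
      continuous_GfunR.aestronglyMeasurable ?_
    filter_upwards with ω
    rw [Real.norm_eq_abs]
    exact abs_GfunR_le hR ω
  -- integrability of the tail bounds pulled back to the path space
  have htail : ∀ (c : Fin N) (i : Fin d), Integrable
      (fun ω : Traj N d => max 0 (|ω c i| - R/2)) P := by
    intro c i
    have hmeas : AEMeasurable (fun ω : Traj N d => ω c) P := (measurable_pi_apply c).aemeasurable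
    have : Integrable (fun x : Vec d => max 0 (|x i| - R/2)) (P.map (fun ω => ω c)) := by
      rw [hm]; exact integrable_tail (hmom c) i _ (by linarith)
    exact (integrable_map_measure ((continuous_const.max
      (((continuous_apply i).abs).sub continuous_const)).aestronglyMeasurable) hmeas).mp this
  have hbound : Integrable (fun ω : Traj N d =>
      ‖h‖ * ∑ i, (max 0 (|ω a i| - R/2) + max 0 (|ω b i| - R/2))) P := by
    refine Integrable.const_mul ?_ _
    exact integrable_finset_sum _ (fun i _ => (htail a i).add (htail b i))
  rw [← integral_sub hG hGR]
  calc |∫ ω, (Gfun k hk h ω - GfunR k hk h R ω) ∂P|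
      ≤ ∫ ω, |Gfun k hk h ω - GfunR k hk h R ω| ∂P := by
        simpa [Real.norm_eq_abs] using norm_integral_le_integral_norm
          (fun ω => Gfun k hk h ω - GfunR k hk h R ω) (μ := P)
    _ ≤ ∫ ω, ‖h‖ * ∑ i, (max 0 (|ω a i| - R/2) + max 0 (|ω b i| - R/2)) ∂P := by
        refine integral_mono (hG.sub hGR).abs hbound ?_
        intro ω
        exact abs_Gfun_sub_GfunR_le hR ω
    _ = errT μs k hk h R := by
        rw [integral_const_mul]
        rw [integral_finset_sum (μ := P) Finset.univ
          (f := fun (i : Fin d) (ω : Traj N d) => max 0 (|ω a i| - R/2) + max 0 (|ω b i| - R/2))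
          (fun i _ => (htail a i).add (htail b i))]
        unfold errT
        congr 1
        apply Finset.sum_congr rfl
        intro i _
        rw [integral_add (htail a i) (htail b i)]
        have key : ∀ c : Fin N, ∫ ω : Traj N d, max 0 (|ω c i| - R/2) ∂P =
            ∫ x : Vec d, max 0 (|x i| - R/2) ∂(μs c) := by
          intro c
          rw [← hm c]
          exact (integral_map (φ := fun ω : Traj N d => ω c) (f := fun x : Vec d => max 0 (|x i| - R/2))
            ((measurable_pi_apply c).aemeasurable)
            ((continuous_const.max
              (((continuous_apply i).abs).sub continuous_const)).aestronglyMeasurable)).symm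
        rw [key a, key b]

lemma errT_tendsto {k : ℕ} (hk : k + 1 < N)
    (h : BoundedContinuousFunction (Fin (k+1) → Vec d) (Vec d))
    (hmom : ∀ k, Integrable (fun x : Vec d => l1 x) (μs k)) :
    Tendsto (fun m : ℕ => errT μs k hk h (m : ℝ)) atTop (𝓝 0) := by
  have key : ∀ (c : Fin N) (i : Fin d), Tendsto
      (fun m : ℕ => ∫ x, max 0 (|x i| - (m : ℝ)/2) ∂(μs c)) atTop (𝓝 0) := by
    intro c i
    have h0 : Tendsto (fun m : ℕ => ∫ x, max 0 (|x i| - (m : ℝ)/2) ∂(μs c)) atTop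
        (𝓝 (∫ x, (0 : ℝ) ∂(μs c))) := by
      refine tendsto_integral_of_dominated_convergence (fun x => l1 x)
        (fun m => (continuous_const.max
          (((continuous_apply i).abs).sub continuous_const)).aestronglyMeasurable)
        (hmom c) ?_ ?_
      · intro m
        filter_upwards with x
        rw [Real.norm_eq_abs, abs_of_nonneg (le_max_left _ _)]
        refine max_le l1_nonneg ?_
        have h1 := abs_le_l1 x i
        have h2 : (0:ℝ) ≤ (m : ℝ)/2 := by positivity
        linarith
      · filter_upwards with x
        have : ∀ᶠ m : ℕ in atTop, max 0 (|x i| - (m : ℝ)/2) = 0 := by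
          have hx : ∀ᶠ m : ℕ in atTop, (2 * |x i| : ℝ) ≤ (m : ℝ) := by
            obtain ⟨m0, hm0⟩ := exists_nat_ge (2 * |x i|)
            filter_upwards [eventually_ge_atTop m0] with m hmm
            exact hm0.trans (by exact_mod_cast hmm)
          filter_upwards [hx] with m hmm
          rw [max_eq_left]
          linarith
        exact Tendsto.congr' (this.mono fun m hmm => hmm.symm) tendsto_const_nhds
    simpa using h0
  have : Tendsto (fun m : ℕ => ∑ i : Fin d,
      ((∫ x, max 0 (|x i| - (m:ℝ)/2) ∂(μs ⟨k+1, hk⟩)) +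
        (∫ x, max 0 (|x i| - (m:ℝ)/2) ∂(μs ⟨k, Nat.lt_of_succ_lt hk⟩)))) atTop (𝓝 0) := by
    have := tendsto_finset_sum (Finset.univ : Finset (Fin d))
      (fun i _ => ((key ⟨k+1, hk⟩ i).add (key ⟨k, Nat.lt_of_succ_lt hk⟩ i)))
    simpa using this
  have := this.const_mul ‖h‖
  simpa [errT] using this

end Approx

theorem approxMart_convex_and_compact {N d : ℕ} (hN : 2 ≤ N) (hd : 1 ≤ d) (ε : ℝ) (hε : 0 ≤ ε)
    (μs : Fin N → Measure (Vec d))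
    (hprob : ∀ k, IsProbabilityMeasure (μs k))
    (hmom : ∀ k, Integrable (fun x : Vec d => l1 x) (μs k)) :
    (∀ P Q : Measure (Traj N d), IsApproxMart ε μs P → IsApproxMart ε μs Q →
      ∀ a : ℝ, a ∈ Set.Icc (0 : ℝ) 1 →
        IsApproxMart ε μs (ENNReal.ofReal a • P + ENNReal.ofReal (1 - a) • Q)) ∧
    IsCompact {P : ProbabilityMeasure (Traj N d) | IsApproxMart ε μs P.toMeasure} := by
  constructor
  · -- convexity
    rintro P Q ⟨hPp, hPm, hPineq⟩ ⟨hQp, hQm, hQineq⟩ a ⟨ha0, ha1⟩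
    have h1a : (0:ℝ) ≤ 1 - a := by linarith
    haveI := hPp; haveI := hQp
    have hsum : ENNReal.ofReal a + ENNReal.ofReal (1 - a) = 1 := by
      rw [← ENNReal.ofReal_add ha0 h1a]
      norm_num
    refine ⟨?_, ?_, ?_⟩
    · constructor
      rw [Measure.add_apply, Measure.smul_apply, Measure.smul_apply, smul_eq_mul, smul_eq_mul,
        measure_univ, measure_univ, mul_one, mul_one, hsum]
    · intro k
      rw [Measure.map_add _ _ (measurable_pi_apply k), Measure.map_smul, Measure.map_smul,
        hPm k, hQm k, ← add_smul, hsum, one_smul]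
    · intro k hk h
      have hGP : Integrable (Gfun k hk h) P := integrable_Gfun hk h hPm hmom
      have hGQ : Integrable (Gfun k hk h) Q := integrable_Gfun hk h hQm hmom
      have h1 : ∫ ω, Gfun k hk h ω ∂P ≤ ε * ‖h‖ := hPineq k hk h
      have h2 : ∫ ω, Gfun k hk h ω ∂Q ≤ ε * ‖h‖ := hQineq k hk h
      show ∫ ω, Gfun k hk h ω ∂(ENNReal.ofReal a • P + ENNReal.ofReal (1 - a) • Q) ≤ ε * ‖h‖
      rw [integral_add_measure (hGP.smul_measure ENNReal.ofReal_ne_top)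
        (hGQ.smul_measure ENNReal.ofReal_ne_top),
        integral_smul_measure, integral_smul_measure,
        ENNReal.toReal_ofReal ha0, ENNReal.toReal_ofReal h1a, smul_eq_mul, smul_eq_mul]
      calc a * ∫ ω, Gfun k hk h ω ∂P + (1 - a) * ∫ ω, Gfun k hk h ω ∂Q
          ≤ a * (ε * ‖h‖) + (1 - a) * (ε * ‖h‖) :=
            add_le_add (mul_le_mul_of_nonneg_left h1 ha0) (mul_le_mul_of_nonneg_left h2 h1a)
        _ = ε * ‖h‖ := by ring
  · -- compactness
    apply isCompact_of_isSeqClosed_of_tight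
    · -- sequential closedness
      intro Q Qlim hQmem htend
      have hmarg : ∀ k : Fin N, Qlim.toMeasure.map (fun ω => ω k) = μs k := by
        intro k
        set Pk : ProbabilityMeasure (Vec d) := ⟨μs k, hprob k⟩ with hPkdef
        have hcont := MeasureTheory.ProbabilityMeasure.continuous_map
          (Ω := Traj N d) (Ω' := Vec d) (f := fun ω => ω k) (continuous_apply k)
        have h2 : Tendsto (fun j => (Q j).map
            ((continuous_apply k).measurable.aemeasurable (μ := (Q j).toMeasure)))
            atTop (𝓝 (Qlim.map ((continuous_apply k).measurable.aemeasurable))) :=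
          (hcont.tendsto Qlim).comp htend
        have hconst : ∀ j, (Q j).map
            ((continuous_apply k).measurable.aemeasurable (μ := (Q j).toMeasure)) = Pk := by
          intro j
          apply ProbabilityMeasure.toMeasure_injective
          rw [ProbabilityMeasure.toMeasure_map]
          exact (hQmem j).2.1 k
        have h3 : Tendsto (fun _ : ℕ => Pk)
            atTop (𝓝 (Qlim.map ((continuous_apply k).measurable.aemeasurable))) :=
          Tendsto.congr hconst h2
        have h4 : Qlim.map ((continuous_apply k).measurable.aemeasurable) = Pk :=
          tendsto_nhds_unique h3 tendsto_const_nhds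
        have h5 := congrArg ProbabilityMeasure.toMeasure h4
        rwa [ProbabilityMeasure.toMeasure_map] at h5
      refine ⟨Qlim.2, hmarg, ?_⟩
      intro k hk h
      haveI := Qlim.2
      show ∫ ω, Gfun k hk h ω ∂Qlim.toMeasure ≤ ε * ‖h‖
      have key : ∀ m : ℕ, ∫ ω, Gfun k hk h ω ∂Qlim.toMeasure ≤
          ε * ‖h‖ + 2 * errT μs k hk h (m : ℝ) := by
        intro m
        have hR : (0:ℝ) ≤ (m : ℝ) := Nat.cast_nonneg m
        set Fb : BoundedContinuousFunction (Traj N d) ℝ :=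
          BoundedContinuousFunction.ofNormedAddCommGroup (GfunR k hk h (m : ℝ)) continuous_GfunR
            (‖h‖ * (d * (m : ℝ)))
            (fun ω => by rw [Real.norm_eq_abs]; exact abs_GfunR_le hR ω) with hFb
        have htendF : Tendsto (fun j => ∫ ω, Fb ω ∂(Q j).toMeasure) atTop
            (𝓝 (∫ ω, Fb ω ∂Qlim.toMeasure)) :=
          (ProbabilityMeasure.tendsto_iff_forall_integral_tendsto.mp htend) Fb
        have hj : ∀ j, ∫ ω, Fb ω ∂(Q j).toMeasure ≤ ε * ‖h‖ + errT μs k hk h (m : ℝ) := by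
          intro j
          haveI := (Q j).2
          have h1 := abs_integral_Gfun_sub_le (P := (Q j).toMeasure) hk h
            ((hQmem j).2.1) hmom hR
          have h2 : ∫ ω, Gfun k hk h ω ∂(Q j).toMeasure ≤ ε * ‖h‖ := (hQmem j).2.2 k hk h
          have h3 : ∫ ω, Fb ω ∂(Q j).toMeasure =
              ∫ ω, GfunR k hk h (m : ℝ) ω ∂(Q j).toMeasure := rfl
          rw [h3]
          have h4 := abs_sub_le_iff.mp h1
          linarith [h4.2]
        have hlimF : ∫ ω, Fb ω ∂Qlim.toMeasure ≤ ε * ‖h‖ + errT μs k hk h (m : ℝ) :=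
          le_of_tendsto' htendF hj
        have h4 := abs_integral_Gfun_sub_le (P := Qlim.toMeasure) hk h hmarg hmom hR
        have h5 : ∫ ω, Fb ω ∂Qlim.toMeasure =
            ∫ ω, GfunR k hk h (m : ℝ) ω ∂Qlim.toMeasure := rfl
        rw [h5] at hlimF
        have h6 := abs_sub_le_iff.mp h4
        linarith [h6.1]
      have hlim : Tendsto (fun m : ℕ => ε * ‖h‖ + 2 * errT μs k hk h (m : ℝ)) atTop
          (𝓝 (ε * ‖h‖)) := by
        have h7 := (errT_tendsto hk h hmom).const_mul 2
        have h8 := tendsto_const_nhds (x := ε * ‖h‖) (f := atTop (α := ℕ)) |>.add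
          ((errT_tendsto hk h hmom).const_mul 2)
        simpa using h8
      exact ge_of_tendsto' hlim key
    · -- tightness
      intro δ hδ
      set B : Fin N → ℝ≥0∞ := fun k => ENNReal.ofReal (∫ x, l1 x ∂(μs k)) with hB
      set sumB : ℝ≥0∞ := ∑ k, B k with hsumB
      have hsumB_ne : sumB ≠ ∞ := by
        rw [hsumB]
        exact (ENNReal.sum_lt_top.mpr (fun k _ => ENNReal.ofReal_lt_top)).ne
      have hδ0 : (δ : ℝ≥0∞) ≠ 0 := by exact_mod_cast hδ.ne'
      set R : ℝ := (sumB / δ).toReal + 1 with hRdef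
      have hR0 : 0 < R := by
        rw [hRdef]
        have := ENNReal.toReal_nonneg (a := sumB / δ)
        linarith
      have hofR : sumB / (δ : ℝ≥0∞) ≤ ENNReal.ofReal R := by
        have h1 : sumB / (δ : ℝ≥0∞) ≠ ∞ :=
          (ENNReal.div_lt_top hsumB_ne hδ0).ne
        calc sumB / (δ : ℝ≥0∞) = ENNReal.ofReal ((sumB / δ).toReal) := by
              rw [ENNReal.ofReal_toReal h1]
          _ ≤ ENNReal.ofReal R := ENNReal.ofReal_le_ofReal (by rw [hRdef]; linarith)
      have hdiv : sumB / ENNReal.ofReal R ≤ (δ : ℝ≥0∞) := by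
        rw [ENNReal.div_le_iff_le_mul (Or.inl (ENNReal.ofReal_pos.mpr hR0).ne')
          (Or.inl ENNReal.ofReal_ne_top)]
        calc sumB = (δ : ℝ≥0∞) * (sumB / (δ : ℝ≥0∞)) := by
              rw [ENNReal.mul_div_cancel hδ0 ENNReal.coe_ne_top]
          _ ≤ (δ : ℝ≥0∞) * ENNReal.ofReal R := mul_le_mul_right hofR _
      set K : Set (Traj N d) := {ω | ∀ k, l1 (ω k) ≤ R} with hK
      have hKclosed : IsClosed K := by
        have : K = ⋂ k, {ω : Traj N d | l1 (ω k) ≤ R} := by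
          ext ω; simp [hK]
        rw [this]
        exact isClosed_iInter fun k =>
          isClosed_le (continuous_l1.comp (continuous_apply k)) continuous_const
      have hKcpt : IsCompact K := by
        refine IsCompact.of_isClosed_subset
          (isCompact_univ_pi (fun _ : Fin N => isCompact_univ_pi
            (fun _ : Fin d => isCompact_Icc (a := -R) (b := R)))) hKclosed ?_
        intro ω hω
        intro k _
        intro i _
        have h1 := hω k
        have h2 := (abs_le_l1 (ω k) i).trans h1
        exact abs_le.mp h2
      refine ⟨K, hKcpt, ?_⟩
      intro P hP
      have hm := hP.2.1
      have hmeasset : MeasurableSet {x : Vec d | R < l1 x} :=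
        measurableSet_lt measurable_const continuous_l1.measurable
      have hcompl : Kᶜ ⊆ ⋃ k, (fun ω : Traj N d => ω k) ⁻¹' {x : Vec d | R < l1 x} := by
        intro ω hω
        rw [hK] at hω
        simp only [Set.mem_compl_iff, Set.mem_setOf_eq, not_forall, not_le] at hω
        obtain ⟨k, hk⟩ := hω
        exact Set.mem_iUnion.mpr ⟨k, hk⟩
      calc P.toMeasure Kᶜ
          ≤ ∑' k : Fin N, P.toMeasure ((fun ω : Traj N d => ω k) ⁻¹' {x : Vec d | R < l1 x}) :=
            (measure_mono hcompl).trans (measure_iUnion_le _)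
        _ = ∑ k : Fin N, P.toMeasure ((fun ω : Traj N d => ω k) ⁻¹' {x : Vec d | R < l1 x}) :=
            tsum_fintype _
        _ ≤ ∑ k : Fin N, B k / ENNReal.ofReal R := by
            refine Finset.sum_le_sum fun k _ => ?_
            have hmap : P.toMeasure ((fun ω : Traj N d => ω k) ⁻¹' {x : Vec d | R < l1 x}) =
                (μs k) {x : Vec d | R < l1 x} := by
              rw [← hm k, Measure.map_apply (measurable_pi_apply k) hmeasset]
            rw [hmap]
            have hmarkov := mul_meas_ge_le_lintegral₀
              (μ := μs k) (f := fun x => ENNReal.ofReal (l1 x))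
              (continuous_l1.measurable.ennreal_ofReal.aemeasurable) (ENNReal.ofReal R)
            have hlint : ∫⁻ x, ENNReal.ofReal (l1 x) ∂(μs k) = B k := by
              rw [hB]
              exact (ofReal_integral_eq_lintegral_ofReal (hmom k)
                (Eventually.of_forall fun x => l1_nonneg)).symm
            have hsub : {x : Vec d | R < l1 x} ⊆
                {x : Vec d | ENNReal.ofReal R ≤ ENNReal.ofReal (l1 x)} :=
              fun x hx => ENNReal.ofReal_le_ofReal (le_of_lt hx)
            have h1 := measure_mono (μ := μs k) hsub
            have h2 : ENNReal.ofReal R *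
                (μs k) {x : Vec d | ENNReal.ofReal R ≤ ENNReal.ofReal (l1 x)} ≤ B k := by
              rw [← hlint]
              exact hmarkov
            have h3 : (μs k) {x : Vec d | ENNReal.ofReal R ≤ ENNReal.ofReal (l1 x)} ≤
                B k / ENNReal.ofReal R := by
              rw [ENNReal.le_div_iff_mul_le (Or.inl (ENNReal.ofReal_pos.mpr hR0).ne')
                (Or.inl ENNReal.ofReal_ne_top)]
              rw [mul_comm]
              exact h2
            exact h1.trans h3
        _ = sumB / ENNReal.ofReal R := by
            rw [hsumB]
            simp only [div_eq_mul_inv]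
            rw [Finset.sum_mul]
        _ ≤ (δ : ℝ≥0∞) := hdiv
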